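/- Let g be a finite-dimensional real Lie algebra equipped with an inner product ⟨·,·⟩; for u ∈ g let ad_u : g → g denote v ↦ ⁅u,v⁆ and ad*_u its adjoint with respect to ⟨·,·⟩. Let X ∈ g satisfy ad*_X = −ad_X and let Φ(t) := exp(t·ad_X). Let v, w ∈ g and λ, σ, ρ ∈ ℝ with ρ ≠ 0 and λ ≠ 0, and define U(t) := X + ρ·Φ(t)(cos(σ+λt)·v − sin(σ+λt)·w). Then U is constant in t (U'(t) = 0 for all t) if and only if ad*_X v = −λ·w and ad*_X w = λ·v. -/

import Mathlib

set_option synthInstance.maxHeartbeats 1000000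


open scoped RealInnerProductSpace

variable {g : Type*} [NormedAddCommGroup g] [InnerProductSpace ℝ g] [FiniteDimensional ℝ g]

/-- The adjoint operator `ad_u : v ↦ ⁅u, v⁆` of a Lie bracket `br`, as a
continuous linear map on the finite-dimensional space `g`. -/
noncomputable def adOp (br : g →ₗ[ℝ] g →ₗ[ℝ] g) (u : g) : g →L[ℝ] g :=
  LinearMap.toContinuousLinearMap (br u)

/-- The coadjoint operator `ad*_u`, the adjoint of `ad_u` with respect to the
inner product. -/
noncomputable def adStarOp (br : g →ₗ[ℝ] g →ₗ[ℝ] g) (u : g) : g →L[ℝ] g :=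
  ContinuousLinearMap.adjoint (adOp br u)

/-- The operator exponential `Φ(t) = exp(t ad_X)`. -/
noncomputable def phiExp (br : g →ₗ[ℝ] g →ₗ[ℝ] g) (X : g) (t : ℝ) : g →L[ℝ] g :=
  NormedSpace.exp (t • adOp br X)

lemma phiExp_inv_apply (br : g →ₗ[ℝ] g →ₗ[ℝ] g) (X : g) (t : ℝ) (x : g) :
    phiExp br X (-t) (phiExp br X t x) = x := by
  have hcomm : Commute ((-t) • adOp br X) (t • adOp br X) :=
    ((Commute.refl (adOp br X)).smul_left _).smul_right _
  have h : phiExp br X (-t) * phiExp br X t = 1 := by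
    rw [phiExp, phiExp, ← NormedSpace.exp_add_of_commute_of_mem_ball (𝕂 := ℝ) hcomm
        (by simp [NormedSpace.expSeries_radius_eq_top]) (by simp [NormedSpace.expSeries_radius_eq_top]), ← add_smul,
      neg_add_cancel, zero_smul, NormedSpace.exp_zero]
  have := congrArg (fun f : g →L[ℝ] g => f x) h
  simpa [ContinuousLinearMap.mul_apply] using this

lemma key_deriv (br : g →ₗ[ℝ] g →ₗ[ℝ] g) (X : g) (v w : g) (lam sig rho : ℝ) (t : ℝ) :
    HasDerivAt
      (fun s : ℝ => X + rho •
        phiExp br X s (Real.cos (sig + lam * s) • v - Real.sin (sig + lam * s) • w))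
      (rho • phiExp br X t
        (Real.cos (sig + lam * t) • (adOp br X v - lam • w)
          - Real.sin (sig + lam * t) • (adOp br X w + lam • v))) t := by
  set A := adOp br X
  have hθ : HasDerivAt (fun s : ℝ => sig + lam * s) lam t := by
    simpa using ((hasDerivAt_id t).const_mul lam).const_add sig
  have hcos : HasDerivAt (fun s : ℝ => Real.cos (sig + lam * s))
      (-Real.sin (sig + lam * t) * lam) t :=
    (Real.hasDerivAt_cos _).comp t hθ
  have hsin : HasDerivAt (fun s : ℝ => Real.sin (sig + lam * s))
      (Real.cos (sig + lam * t) * lam) t :=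
    (Real.hasDerivAt_sin _).comp t hθ
  have hc : HasDerivAt
      (fun s : ℝ => Real.cos (sig + lam * s) • v - Real.sin (sig + lam * s) • w)
      ((-Real.sin (sig + lam * t) * lam) • v - (Real.cos (sig + lam * t) * lam) • w) t :=
    (hcos.smul_const v).sub (hsin.smul_const w)
  have hΦ : HasDerivAt (fun s : ℝ => phiExp br X s) (phiExp br X t * A) t :=
    hasDerivAt_exp_smul_const A t
  have h := ((hΦ.clm_apply hc).const_smul rho).const_add X
  convert h using 1
  · rfl
  have : (phiExp br X t * A)
      (Real.cos (sig + lam * t) • v - Real.sin (sig + lam * t) • w)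
      = phiExp br X t (Real.cos (sig + lam * t) • A v - Real.sin (sig + lam * t) • A w) := by
    simp [ContinuousLinearMap.mul_apply, map_sub, map_smul]
  rw [this, ← (phiExp br X t).map_add]
  congr 1
  congr 1
  simp only [smul_sub, smul_add, smul_smul]
  module

/-- The stationarity criterion of Theorem 5.6 in the
finite-dimensional real Lie algebra setting (the Lie algebra is a
finite-dimensional real inner product space `g` with an antisymmetric bilinear
bracket `br` satisfying the Jacobi identity). With `ad*_X = -ad_X`, `ρ ≠ 0`
and `λ ≠ 0`, the curve `U(t) = X + ρ Φ(t)(cos(σ+λt) v - sin(σ+λt) w)` is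
constant in `t` if and only if `ad*_X v = -λ w` and `ad*_X w = λ v`. -/
theorem statement17 (br : g →ₗ[ℝ] g →ₗ[ℝ] g)
    (hanti : ∀ x y : g, br x y = -br y x)
    (hjacobi : ∀ x y z : g, br (br x y) z + br (br y z) x + br (br z x) y = 0)
    (X : g) (hX : adStarOp br X = -adOp br X)
    (v w : g) (lam sig rho : ℝ) (hrho : rho ≠ 0) (hlam : lam ≠ 0) :
    (∀ t : ℝ,
      HasDerivAt
        (fun s : ℝ => X + rho •
          phiExp br X s (Real.cos (sig + lam * s) • v - Real.sin (sig + lam * s) • w))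
        0 t)
      ↔ (adStarOp br X v = -(lam • w) ∧ adStarOp br X w = lam • v) := by
  set A := adOp br X with hAdef
  constructor
  · intro h
    have hE : ∀ t : ℝ,
        Real.cos (sig + lam * t) • (A v - lam • w)
          - Real.sin (sig + lam * t) • (A w + lam • v) = 0 := by
      intro t
      have h1 := (h t).unique (key_deriv br X v w lam sig rho t)
      have h2 : phiExp br X t
          (Real.cos (sig + lam * t) • (A v - lam • w)
            - Real.sin (sig + lam * t) • (A w + lam • v)) = 0 := by
        rcases smul_eq_zero.mp h1.symm with h | h
        · exact absurd h hrho
        · exact h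
      have := congrArg (phiExp br X (-t)) h2
      rwa [phiExp_inv_apply, map_zero] at this
    have hv : A v = lam • w := by
      have := hE ((-sig) / lam)
      rw [mul_div_cancel₀ _ hlam, add_neg_cancel] at this
      simp at this
      linear_combination (norm := module) this
    have hw : A w = -(lam • v) := by
      have := hE ((Real.pi / 2 - sig) / lam)
      rw [mul_div_cancel₀ _ hlam, add_sub_cancel] at this
      simp at this
      linear_combination (norm := module) -this
    constructor
    · rw [hX]; simp [hv]
    · rw [hX]; simp [hw]
  · rintro ⟨hv, hw⟩
    have hv' : A v = lam • w := by
      have := congrArg (fun f : g →L[ℝ] g => f v) hX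
      simp only [ContinuousLinearMap.neg_apply] at this
      rw [hv] at this
      linear_combination (norm := module) this
    have hw' : A w = -(lam • v) := by
      have := congrArg (fun f : g →L[ℝ] g => f w) hX
      simp only [ContinuousLinearMap.neg_apply] at this
      rw [hw] at this
      linear_combination (norm := module) this
    intro t
    have h := key_deriv br X v w lam sig rho t
    rw [show A v - lam • w = 0 by rw [hv']; abel,
      show A w + lam • v = 0 by rw [hw']; abel] at h
    simpa using h
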